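/- arXiv:1110.0968 — 9 statements merged into one kernel-verified Lean document; each statement's English description precedes it below -/
import Mathlib

section
/- Let F be a finite field with 5^n elements and let x ∈ F with x ≠ 0. If x³ + x is a square in F, then, setting t = x + x⁻¹, the element t³ + t is also a square in F. (This is the part of Lemma 2.1 asserting that the map θ(x) = x + x⁻¹ maps the set A_n of x-coordinates of F_{5^n}-rational points of the elliptic curve y² = x³ + x into itself.) -/
theorem theta_maps_An_to_An (n : ℕ) (hn : 0 < n)
    (F : Type*) [Field F] [Fintype F] (hF : Fintype.card F = 5 ^ n)
    (x : F) (hx : x ≠ 0)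
    (h : ∃ y : F, y ^ 2 = x ^ 3 + x) :
    ∃ y : F, y ^ 2 = (x + x⁻¹) ^ 3 + (x + x⁻¹) := by
  obtain ⟨y, hy⟩ := h
  have hp : (ringChar F).Prime := CharP.char_is_prime F (ringChar F)
  haveI : Fact (ringChar F).Prime := ⟨hp⟩
  obtain ⟨m, -, hm⟩ := FiniteField.card F (ringChar F)
  have hdvd : ringChar F ∣ 5 ^ n := by
    rw [← hF, hm]
    exact dvd_pow_self _ m.pos.ne'
  have h5 : ringChar F = 5 :=
    (Nat.prime_dvd_prime_iff_eq hp (by norm_num)).mp (hp.dvd_of_dvd_pow hdvd)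
  have hchar : (5 : F) = 0 := (ringChar.spec F 5).mpr (h5 ▸ dvd_rfl)
  refine ⟨y * (x ^ 2 - 1) * (x⁻¹) ^ 2, ?_⟩
  field_simp
  linear_combination (x ^ 2 - 1) ^ 2 * hy + (-x ^ 5 - x ^ 3) * hchar
end

section
/- Let F be a finite field with 5^n elements and let x ∈ F with x ≠ 0, x ≠ 1 and x ≠ −1. If x³ + x is not a square in F, then, setting t = x + x⁻¹, the element t³ + t is not a square in F, and moreover t ≠ 1 and t ≠ −1. (This is the part of Lemma 2.1 asserting that θ maps the set B_n into itself.) -/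
theorem theta_maps_Bn_to_Bn (n : ℕ) (hn : 0 < n)
    (F : Type*) [Field F] [Fintype F] (hF : Fintype.card F = 5 ^ n)
    (x : F) (hx0 : x ≠ 0) (hx1 : x ≠ 1) (hx2 : x ≠ -1)
    (h : ¬ ∃ y : F, y ^ 2 = x ^ 3 + x) :
    (¬ ∃ y : F, y ^ 2 = (x + x⁻¹) ^ 3 + (x + x⁻¹)) ∧
      x + x⁻¹ ≠ 1 ∧ x + x⁻¹ ≠ -1 := by
  have h5 : (5 : F) = 0 := by
    have hc := FiniteField.cast_card_eq_zero F
    rw [hF] at hc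
    push_cast at hc
    exact pow_eq_zero_iff hn.ne' |>.mp hc
  have hsq : x ^ 2 - 1 ≠ 0 := by
    intro hc
    rcases mul_eq_zero.mp (by linear_combination hc : (x - 1) * (x + 1) = 0) with h1 | h1
    · exact hx1 (by linear_combination h1)
    · exact hx2 (by linear_combination h1)
  refine ⟨?_, ?_, ?_⟩
  · rintro ⟨y, hy⟩
    apply h
    refine ⟨y * x ^ 2 / (x ^ 2 - 1), ?_⟩
    rw [div_pow, div_eq_iff (pow_ne_zero 2 hsq)]
    field_simp at hy
    linear_combination x * hy + x ^ 3 * (x ^ 2 + 1) * h5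
  · intro ht
    apply h
    have hx : x ^ 2 = x - 1 := by
      have : x * (x + x⁻¹) = x * 1 := by rw [ht]
      field_simp at this
      linear_combination this
    exact ⟨x, by linear_combination -x * hx⟩
  · intro ht
    apply h
    have hx : x ^ 2 = -x - 1 := by
      have : x * (x + x⁻¹) = x * (-1) := by rw [ht]
      field_simp at this
      linear_combination this
    exact ⟨2 * x, by linear_combination (5 - x) * hx - (x + 1) * h5⟩
end

section
/- Let π₅ = 1 + 2i in ℤ[i] and let n be an odd positive integer. Then the highest power of 2 dividing the norm N(π₅ⁿ − 1) is 2²; that is, 4 divides N(π₅ⁿ − 1) but 8 does not. (Odd case of Lemma 2.6.) -/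
lemma pi_pow_odd_form (m : ℕ) :
    ∃ a b : ℤ, (⟨1, 2⟩ : GaussianInt) ^ (2 * m + 1) = ⟨1 + 4 * a, 2 + 4 * b⟩ := by
  induction m with
  | zero => exact ⟨0, 0, by norm_num⟩
  | succ m ih =>
    obtain ⟨a, b, h⟩ := ih
    refine ⟨-3 - 3 * a - 4 * b, -1 + 4 * a - 3 * b, ?_⟩
    have hn : 2 * (m + 1) + 1 = (2 * m + 1) + 2 := by ring
    rw [hn, pow_add, h]
    ext <;> simp [pow_two, Zsqrtd.re_mul, Zsqrtd.im_mul] <;> ring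

theorem norm_pi_pow_sub_one_odd (n : ℕ) (hn : 0 < n) (hodd : Odd n) :
    (4 : ℤ) ∣ Zsqrtd.norm ((⟨1, 2⟩ : GaussianInt) ^ n - 1) ∧
      ¬ (8 : ℤ) ∣ Zsqrtd.norm ((⟨1, 2⟩ : GaussianInt) ^ n - 1) := by
  obtain ⟨m, rfl⟩ := hodd
  obtain ⟨a, b, h⟩ := pi_pow_odd_form m
  rw [h]
  have hone : (1 : GaussianInt) = ⟨1, 0⟩ := rfl
  rw [hone]
  have hnorm : Zsqrtd.norm ((⟨1 + 4 * a, 2 + 4 * b⟩ : GaussianInt) - ⟨1, 0⟩)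
      = 4 + 16 * (a ^ 2 + b + b ^ 2) := by
    simp [Zsqrtd.norm_def, Zsqrtd.re_sub, Zsqrtd.im_sub]
    ring
  rw [hnorm]
  constructor
  · exact ⟨1 + 4 * (a ^ 2 + b + b ^ 2), by ring⟩
  · intro ⟨k, hk⟩
    omega
end

section
/- Let π₅ = 1 + 2i in ℤ[i] and let n = 2^l·m be an even positive integer, where l ≥ 1 and m is odd. Then the highest power of 2 dividing the norm N(π₅ⁿ − 1) is 2^(3+2l); that is, 2^(3+2l) divides N(π₅ⁿ − 1) but 2^(4+2l) does not. (Even case of Lemma 2.6.) -/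
open GaussianInt

private def lam : GaussianInt := ⟨1, 1⟩

private lemma lam_dvd_iff (w : GaussianInt) : lam ∣ w ↔ (2 : ℤ) ∣ (w.re + w.im) := by
  constructor
  · rintro ⟨z, rfl⟩
    refine ⟨z.re, ?_⟩
    simp [lam, Zsqrtd.re_mul, Zsqrtd.im_mul]
    ring
  · rintro ⟨k, hk⟩
    refine ⟨⟨k, k - w.re⟩, ?_⟩
    ext <;> simp [lam, Zsqrtd.re_mul, Zsqrtd.im_mul] <;> omega

private lemma lam_not_dvd_mul {u v : GaussianInt} (hu : ¬ lam ∣ u) (hv : ¬ lam ∣ v) :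
    ¬ lam ∣ (u * v) := by
  rw [lam_dvd_iff] at *
  simp only [Zsqrtd.re_mul, Zsqrtd.im_mul]
  intro h
  have key : (u.re * v.re + (-1) * u.im * v.im) + (u.re * v.im + u.im * v.re)
      = (u.re + u.im) * (v.re + v.im) - 2 * (u.im * v.im) := by ring
  rw [key] at h
  have h2 : (2 : ℤ) ∣ (u.re + u.im) * (v.re + v.im) := by
    omega
  rcases Int.prime_two.dvd_mul.mp h2 with h' | h' <;> [exact hu h'; exact hv h']

private lemma key_lemma (l : ℕ) (hl : 1 ≤ l) :
    ∃ w : GaussianInt, (⟨1, 2⟩ : GaussianInt) ^ (2 ^ l) - 1 = lam ^ (3 + 2 * l) * w ∧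
      ¬ lam ∣ w := by
  induction l, hl using Nat.le_induction with
  | base =>
    refine ⟨⟨0, -1⟩, ?_, ?_⟩
    · decide
    · rw [lam_dvd_iff]; decide
  | succ l hl ih =>
    obtain ⟨w, hw, hnd⟩ := ih
    refine ⟨w * (⟨0, -1⟩ + lam ^ (1 + 2 * l) * w), ?_, ?_⟩
    · have h2 : (2 : GaussianInt) = lam ^ 2 * ⟨0, -1⟩ := by decide
      have e1 : (⟨1, 2⟩ : GaussianInt) ^ (2 ^ (l + 1)) - 1
          = ((⟨1, 2⟩ : GaussianInt) ^ (2 ^ l) - 1) * ((⟨1, 2⟩ : GaussianInt) ^ (2 ^ l) + 1) := by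
        rw [pow_succ, pow_mul]
        ring
      have e2 : (⟨1, 2⟩ : GaussianInt) ^ (2 ^ l) + 1 = lam ^ (3 + 2 * l) * w + 2 := by
        rw [← hw]; ring
      rw [e1, hw, e2, h2]
      have : 3 + 2 * l = 2 + (1 + 2 * l) := by ring
      rw [this]
      ring
    · apply lam_not_dvd_mul hnd
      intro hd
      have h1 : lam ∣ lam ^ (1 + 2 * l) * w :=
        dvd_mul_of_dvd_left (dvd_pow_self lam (by omega)) w
      have h2 : lam ∣ (⟨0, -1⟩ : GaussianInt) := by
        have := dvd_sub hd h1
        simpa using this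
      rw [lam_dvd_iff] at h2
      exact absurd h2 (by decide)

private lemma geom_not_dvd (x : GaussianInt) (hx : lam ∣ x - 1) (m : ℕ) (hm : Odd m) :
    ¬ lam ∣ (∑ i ∈ Finset.range m, x ^ i) := by
  intro h
  have hsub : lam ∣ (∑ i ∈ Finset.range m, x ^ i) - (m : GaussianInt) := by
    have : (∑ i ∈ Finset.range m, x ^ i) - (m : GaussianInt)
        = ∑ i ∈ Finset.range m, (x ^ i - 1) := by
      rw [Finset.sum_sub_distrib]
      simp
    rw [this]
    apply Finset.dvd_sum
    intro i _
    have : x ^ i - 1 = (∑ j ∈ Finset.range i, x ^ j) * (x - 1) := (geom_sum_mul x i).symm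
    rw [this]
    exact Dvd.dvd.mul_left hx _
  have hm' : lam ∣ (m : GaussianInt) := by
    have := dvd_sub h hsub
    simpa using this
  rw [lam_dvd_iff] at hm'
  simp only [Zsqrtd.re_natCast, Zsqrtd.im_natCast, add_zero] at hm'
  have h2 : (2 : ℕ) ∣ m := by exact_mod_cast hm'
  exact ((Nat.not_even_iff_odd.mpr hm)) (even_iff_two_dvd.mpr h2)

private lemma norm_odd_of_not_lam_dvd {w : GaussianInt} (h : ¬ lam ∣ w) :
    ¬ (2 : ℤ) ∣ Zsqrtd.norm w := by
  rw [lam_dvd_iff] at h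
  intro hd
  apply h
  have hn : Zsqrtd.norm w = w.re * w.re + w.im * w.im := by
    unfold Zsqrtd.norm; ring
  rw [hn] at hd
  have h1 : (2:ℤ) ∣ w.re * (w.re - 1) := (Int.even_mul_pred_self w.re).two_dvd
  have h2 : (2:ℤ) ∣ w.im * (w.im - 1) := (Int.even_mul_pred_self w.im).two_dvd
  have e : w.re * w.re + w.im * w.im - (w.re + w.im)
      = w.re * (w.re - 1) + w.im * (w.im - 1) := by ring
  omega

theorem norm_pi_pow_sub_one_even (l m : ℕ) (hl : 1 ≤ l) (hm : Odd m) :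
    (2 : ℤ) ^ (3 + 2 * l) ∣ Zsqrtd.norm ((⟨1, 2⟩ : GaussianInt) ^ (2 ^ l * m) - 1) ∧
      ¬ (2 : ℤ) ^ (4 + 2 * l) ∣ Zsqrtd.norm ((⟨1, 2⟩ : GaussianInt) ^ (2 ^ l * m) - 1) := by
  obtain ⟨w, hw, hnd⟩ := key_lemma l hl
  set x := (⟨1, 2⟩ : GaussianInt) ^ (2 ^ l) with hx
  have hfact : (⟨1, 2⟩ : GaussianInt) ^ (2 ^ l * m) - 1
      = (∑ i ∈ Finset.range m, x ^ i) * (x - 1) := by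
    rw [geom_sum_mul, pow_mul]
  have hxd : lam ∣ x - 1 := by
    rw [hw]; exact dvd_mul_of_dvd_left (dvd_pow_self lam (by omega)) w
  have hS := geom_not_dvd x hxd m hm
  have hrw : (⟨1, 2⟩ : GaussianInt) ^ (2 ^ l * m) - 1
      = lam ^ (3 + 2 * l) * ((∑ i ∈ Finset.range m, x ^ i) * w) := by
    rw [hfact, hw]; ring
  have hnp : Zsqrtd.norm (lam ^ (3 + 2 * l)) = 2 ^ (3 + 2 * l) := by
    have : Zsqrtd.norm lam = 2 := by decide
    rw [show Zsqrtd.norm (lam ^ (3 + 2 * l)) = (Zsqrtd.normMonoidHom (lam ^ (3 + 2 * l)) : ℤ) from rfl,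
      map_pow]
    simp [Zsqrtd.normMonoidHom, this]
  rw [hrw, Zsqrtd.norm_mul, hnp]
  have hodd : ¬ (2 : ℤ) ∣ Zsqrtd.norm ((∑ i ∈ Finset.range m, x ^ i) * w) :=
    norm_odd_of_not_lam_dvd (lam_not_dvd_mul hS hnd)
  constructor
  · exact Dvd.intro _ rfl
  · intro hdvd
    apply hodd
    have hpos : (2 : ℤ) ^ (3 + 2 * l) ≠ 0 := by positivity
    rw [show 4 + 2 * l = (3 + 2 * l) + 1 from by ring, pow_succ] at hdvd
    exact (mul_dvd_mul_iff_left hpos).mp hdvd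
end

section
/- Let π₅ = 1 + 2i in ℤ[i] and let n be an even positive integer. Then the highest power of 2 dividing the norm N(π₅ⁿ + 1) is 2²; that is, 4 divides N(π₅ⁿ + 1) but 8 does not. -/
lemma pi_pow_four_mul (m : ℕ) :
    ∃ x y : ℤ, (⟨1, 2⟩ : GaussianInt) ^ (4 * m) = ⟨8 * x + 1, 8 * y⟩ := by
  induction m with
  | zero =>
      refine ⟨0, 0, ?_⟩
      ext <;> simp
  | succ k ih =>
      obtain ⟨x, y, h⟩ := ih
      refine ⟨-7 * x + 24 * y - 1, -24 * x - 7 * y - 3, ?_⟩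
      have h4 : 4 * (k + 1) = 4 * k + 4 := by ring
      rw [h4, pow_add, h]
      have hπ4 : (⟨1, 2⟩ : GaussianInt) ^ 4 = ⟨-7, -24⟩ := by
        ext <;> simp [pow_succ, Zsqrtd.re_mul, Zsqrtd.im_mul] <;> ring
      rw [hπ4]
      ext <;> simp [Zsqrtd.re_mul, Zsqrtd.im_mul] <;> ring

theorem norm_pi_pow_add_one_even (n : ℕ) (hn : 0 < n) (heven : Even n) :
    (4 : ℤ) ∣ Zsqrtd.norm ((⟨1, 2⟩ : GaussianInt) ^ n + 1) ∧
      ¬ (8 : ℤ) ∣ Zsqrtd.norm ((⟨1, 2⟩ : GaussianInt) ^ n + 1) := by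
  obtain ⟨k, hk⟩ := heven
  have hA : ∃ A : ℤ, Zsqrtd.norm ((⟨1, 2⟩ : GaussianInt) ^ n + 1) = 8 * A + 4 := by
    rcases Nat.even_or_odd k with ⟨j, hj⟩ | ⟨j, hj⟩
    · have hn4 : n = 4 * j := by omega
      obtain ⟨x, y, h⟩ := pi_pow_four_mul j
      rw [hn4, h]
      refine ⟨8 * x ^ 2 + 4 * x + 8 * y ^ 2, ?_⟩
      simp [Zsqrtd.norm_def, Zsqrtd.ext_iff]
      ring
    · have hn4 : n = 4 * j + 2 := by omega
      obtain ⟨x, y, h⟩ := pi_pow_four_mul j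
      have hπ2 : (⟨1, 2⟩ : GaussianInt) ^ 2 = ⟨-3, 4⟩ := by
        ext <;> simp [pow_succ, Zsqrtd.re_mul, Zsqrtd.im_mul] <;> ring
      rw [hn4, pow_add, h, hπ2]
      refine ⟨200 * x ^ 2 + 200 * y ^ 2 + 44 * x - 8 * y + 2, ?_⟩
      simp [Zsqrtd.norm_def, Zsqrtd.re_mul, Zsqrtd.im_mul]
      ring
  obtain ⟨A, hA⟩ := hA
  constructor
  · omega
  · omega
end

section
/- Let π₅ = 1 + 2i and ρ = −1 + i in ℤ[i], and let n be an odd positive integer. Then ρ² divides π₅ⁿ − 1 in ℤ[i], but ρ³ does not. (That is, the exponent e₀ of ρ in the prime factorization of π₅ⁿ − 1 equals 2 when n is odd; this e₀ is the depth of the trees rooted at the periodic vertices of the graph of θ on A_n.) -/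
theorem rho_valuation_pi_pow_sub_one_odd (n : ℕ) (hn : 0 < n) (hodd : Odd n) :
    (⟨-1, 1⟩ : GaussianInt) ^ 2 ∣ (⟨1, 2⟩ : GaussianInt) ^ n - 1 ∧
      ¬ (⟨-1, 1⟩ : GaussianInt) ^ 3 ∣ (⟨1, 2⟩ : GaussianInt) ^ n - 1 := by
  set ρ : GaussianInt := ⟨-1, 1⟩ with hρ
  set π : GaussianInt := ⟨1, 2⟩ with hπ
  obtain ⟨k, hk⟩ := hodd
  have h1 : π ^ n - 1 = π * ((π ^ 2) ^ k - 1) + (π - 1) := by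
    subst hk; ring
  have h2 : ρ ^ 4 ∣ (π ^ 2) ^ k - 1 := by
    refine dvd_trans (b := π ^ 2 - 1) ⟨⟨1, -1⟩, ?_⟩ ?_
    · decide
    · simpa using sub_dvd_pow_sub_pow (π ^ 2) 1 k
  have h3 : π - 1 = -ρ ^ 2 := by decide
  constructor
  · rw [h1, h3]
    exact dvd_add (dvd_mul_of_dvd_right ((pow_dvd_pow ρ (by norm_num)).trans h2) π)
      (dvd_neg.mpr dvd_rfl)
  · intro h
    have h4 : ρ ^ 3 ∣ π - 1 := by
      have := dvd_sub h (dvd_mul_of_dvd_right ((pow_dvd_pow ρ (by norm_num)).trans h2) π)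
      rwa [h1, add_sub_cancel_left] at this
    rw [h3, dvd_neg] at h4
    obtain ⟨c, hc⟩ := h4
    rw [show ρ ^ 2 = (⟨0, -2⟩ : GaussianInt) from by decide,
      show ρ ^ 3 = (⟨2, 2⟩ : GaussianInt) from by decide, Zsqrtd.ext_iff] at hc
    simp [Zsqrtd.re_mul, Zsqrtd.im_mul] at hc
    omega
end

section
/- Let π₅ = 1 + 2i and ρ = −1 + i in ℤ[i], and let n = 2^l·m be an even positive integer, where l ≥ 1 and m is odd. Then ρ^(3+2l) divides π₅ⁿ − 1 in ℤ[i], but ρ^(4+2l) does not. (That is, the exponent e₀ of ρ in the prime factorization of π₅ⁿ − 1 equals 3 + 2l when n is even.) -/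
set_option synthInstance.maxHeartbeats 1000000
set_option maxHeartbeats 1000000

open GaussianInt

namespace RhoValAux

abbrev ρ : GaussianInt := ⟨-1, 1⟩
abbrev π : GaussianInt := ⟨1, 2⟩

lemma norm_rho : Zsqrtd.norm ρ = 2 := by simp [Zsqrtd.norm_def]

lemma prime_rho : Prime ρ := by
  rw [← irreducible_iff_prime]
  constructor
  · intro h
    have := Zsqrtd.norm_eq_one_iff.2 h
    rw [norm_rho] at this
    norm_num at this
  · intro a b hab
    have h2 : (Zsqrtd.norm a).natAbs * (Zsqrtd.norm b).natAbs = 2 := by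
      rw [← Int.natAbs_mul, ← Zsqrtd.norm_mul, ← hab, norm_rho]; rfl
    rcases (Nat.prime_two.eq_one_or_self_of_dvd _ ⟨_, h2.symm⟩) with h | h
    · exact Or.inl (Zsqrtd.norm_eq_one_iff.1 h)
    · right
      apply Zsqrtd.norm_eq_one_iff.1
      have := h2
      rw [h] at this
      omega

lemma rho_not_dvd_pi : ¬ ρ ∣ π := by
  intro ⟨c, hc⟩
  have h5 : Zsqrtd.norm π = 5 := by simp [Zsqrtd.norm_def]
  have : (5 : ℤ) = 2 * Zsqrtd.norm c := by rw [← h5, hc, Zsqrtd.norm_mul, norm_rho]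
  omega

lemma rho_not_dvd_i : ¬ ρ ∣ (⟨0, 1⟩ : GaussianInt) := by
  intro h
  have hu : IsUnit (⟨0, 1⟩ : GaussianInt) := by
    refine IsUnit.of_mul_eq_one ⟨0, -1⟩ ?_
    ext <;> simp [Zsqrtd.re_mul, Zsqrtd.im_mul]
  exact prime_rho.not_isUnit (isUnit_of_dvd_unit h hu)

lemma hrho2 : ρ ^ 2 = ⟨0, -2⟩ := by
  ext <;> simp [pow_two, Zsqrtd.re_mul, Zsqrtd.im_mul]

lemma hrho3 : ρ ^ 3 = ⟨2, 2⟩ := by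
  ext <;> simp [pow_succ, pow_two, Zsqrtd.re_mul, Zsqrtd.im_mul]

lemma pi_sq_sub_one : π ^ 2 - 1 = -ρ ^ 5 := by
  ext <;> simp [pow_succ, pow_two, Zsqrtd.re_mul, Zsqrtd.im_mul] <;> rfl

lemma two_eq : (2 : GaussianInt) = ⟨0, 1⟩ * ρ ^ 2 := by
  rw [hrho2]; ext <;> simp [Zsqrtd.re_mul, Zsqrtd.im_mul]

-- A : for m odd, π^m - 1 = ρ^2 * u with ρ ∤ u
lemma lemA (k : ℕ) : ∃ u, π ^ (2 * k + 1) - 1 = ρ ^ 2 * u ∧ ¬ ρ ∣ u := by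
  induction k with
  | zero =>
    refine ⟨-1, ?_, ?_⟩
    · rw [hrho2]; ext <;> simp
    · intro h
      exact prime_rho.not_unit (isUnit_of_dvd_unit h isUnit_one.neg)
  | succ k ih =>
    obtain ⟨u, hu, hnd⟩ := ih
    refine ⟨π ^ 2 * u - ρ ^ 3, ?_, ?_⟩
    · have : π ^ (2 * (k + 1) + 1) - 1 = π ^ 2 * (π ^ (2 * k + 1) - 1) + (π ^ 2 - 1) := by
        ring_nf
      rw [this, hu, pi_sq_sub_one, show (5 : ℕ) = 2 + 3 by rfl, pow_add]
      ring
    · intro h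
      have h3 : ρ ∣ ρ ^ 3 := dvd_pow_self _ (by norm_num)
      have : ρ ∣ π ^ 2 * u := by
        have := dvd_add h h3
        simpa using this
      rcases prime_rho.dvd_mul.1 this with h' | h'
      · exact rho_not_dvd_pi (prime_rho.dvd_of_dvd_pow h')
      · exact hnd h'

-- B : for m odd, π^m + 1 = ρ^3 * u with ρ ∤ u
lemma lemB (k : ℕ) : ∃ u, π ^ (2 * k + 1) + 1 = ρ ^ 3 * u ∧ ¬ ρ ∣ u := by
  induction k with
  | zero =>
    refine ⟨1, ?_, ?_⟩
    · rw [hrho3]; ext <;> simp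
    · intro h
      exact prime_rho.not_unit (isUnit_of_dvd_unit h isUnit_one)
  | succ k ih =>
    obtain ⟨u, hu, hnd⟩ := ih
    refine ⟨π ^ 2 * u + ρ ^ 2, ?_, ?_⟩
    · have : π ^ (2 * (k + 1) + 1) + 1 = π ^ 2 * (π ^ (2 * k + 1) + 1) - (π ^ 2 - 1) := by
        rw [show 2 * (k + 1) + 1 = (2 * k + 1) + 2 by ring, pow_add]
        ring
      rw [this, hu, pi_sq_sub_one, show (5 : ℕ) = 3 + 2 by rfl, pow_add]
      ring
    · intro h
      have h2 : ρ ∣ ρ ^ 2 := dvd_pow_self _ (by norm_num)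
      have : ρ ∣ π ^ 2 * u := (dvd_add_right h2).1 (by simpa [add_comm] using h)
      rcases prime_rho.dvd_mul.1 this with h' | h'
      · exact rho_not_dvd_pi (prime_rho.dvd_of_dvd_pow h')
      · exact hnd h'

lemma main (l m : ℕ) (hl : 1 ≤ l) (hm : Odd m) :
    ∃ u, π ^ (2 ^ l * m) - 1 = ρ ^ (3 + 2 * l) * u ∧ ¬ ρ ∣ u := by
  obtain ⟨k, rfl⟩ := hm
  induction l with
  | zero => omega
  | succ l ih =>
    rcases Nat.eq_or_lt_of_le hl with h1 | h1
    · -- l + 1 = 1, base case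
      obtain ⟨u1, hu1, hn1⟩ := lemA k
      obtain ⟨u2, hu2, hn2⟩ := lemB k
      have : l = 0 := by omega
      subst this
      refine ⟨u1 * u2, ?_, ?_⟩
      · have : π ^ (2 ^ 1 * (2 * k + 1)) - 1
            = (π ^ (2 * k + 1) - 1) * (π ^ (2 * k + 1) + 1) := by
          rw [show 2 ^ 1 * (2 * k + 1) = (2 * k + 1) * 2 by ring, pow_mul]
          ring
        rw [this, hu1, hu2]
        ring
      · intro h
        rcases prime_rho.dvd_mul.1 h with h' | h' <;> [exact hn1 h'; exact hn2 h']
    · have hl' : 1 ≤ l := by omega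
      obtain ⟨u, hu, hnd⟩ := ih hl'
      refine ⟨u * (ρ ^ (1 + 2 * l) * u + ⟨0, 1⟩), ?_, ?_⟩
      · have hsq : π ^ (2 ^ (l + 1) * (2 * k + 1)) - 1
            = (π ^ (2 ^ l * (2 * k + 1)) - 1) * ((π ^ (2 ^ l * (2 * k + 1)) - 1) + 2) := by
          rw [show 2 ^ (l + 1) * (2 * k + 1) = (2 ^ l * (2 * k + 1)) * 2 by ring, pow_mul]
          ring
        rw [hsq, hu, two_eq, hrho2]
        have h1 : (⟨0,-2⟩ : GaussianInt) = ρ ^ 2 := hrho2.symm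
        rw [h1]
        rw [show 3 + 2 * (l + 1) = (3 + 2 * l) + 2 by ring]
        rw [show 3 + 2 * l = 2 + (1 + 2 * l) by ring, pow_add, pow_add]
        ring
      · intro h
        rcases prime_rho.dvd_mul.1 h with h' | h'
        · exact hnd h'
        · have hdvd : ρ ∣ ρ ^ (1 + 2 * l) * u :=
            Dvd.dvd.mul_right (dvd_pow_self _ (by omega)) u
          have : ρ ∣ (⟨0, 1⟩ : GaussianInt) := (dvd_add_right hdvd).1 h'
          exact rho_not_dvd_i this

end RhoValAux

theorem rho_valuation_pi_pow_sub_one_even (l m : ℕ) (hl : 1 ≤ l) (hm : Odd m) :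
    (⟨-1, 1⟩ : GaussianInt) ^ (3 + 2 * l) ∣ (⟨1, 2⟩ : GaussianInt) ^ (2 ^ l * m) - 1 ∧
      ¬ (⟨-1, 1⟩ : GaussianInt) ^ (4 + 2 * l) ∣ (⟨1, 2⟩ : GaussianInt) ^ (2 ^ l * m) - 1 := by
  obtain ⟨u, hu, hnd⟩ := RhoValAux.main l m hl hm
  constructor
  · exact ⟨u, hu⟩
  · intro ⟨c, hc⟩
    apply hnd
    have hne : (RhoValAux.ρ : GaussianInt) ^ (3 + 2 * l) ≠ 0 :=
      pow_ne_zero _ RhoValAux.prime_rho.ne_zero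
    have : RhoValAux.ρ ^ (3 + 2 * l) * u = RhoValAux.ρ ^ (3 + 2 * l) * (RhoValAux.ρ * c) := by
      rw [← hu, hc, show 4 + 2 * l = (3 + 2 * l) + 1 by ring, pow_succ]
      ring
    exact ⟨c, mul_left_cancel₀ hne this⟩
end

section
/- Let π₅ = 1 + 2i and ρ = −1 + i in ℤ[i], and let n be an odd positive integer. Then ρ³ divides π₅ⁿ + 1 in ℤ[i], but ρ⁴ does not. (That is, the exponent e₀ of ρ in the prime factorization of π₅ⁿ + 1 equals 3 when n is odd; this is the depth of the trees rooted at periodic vertices of the graph of θ on B_n for odd n.) -/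
lemma pi_sq_aux (k : ℕ) : ∃ v : GaussianInt, (⟨1, 2⟩ : GaussianInt) ^ (2 * k) = 1 + 4 * v := by
  induction k with
  | zero => exact ⟨0, by norm_num⟩
  | succ k ih =>
    obtain ⟨v, hv⟩ := ih
    refine ⟨⟨-1, 1⟩ + v + 4 * v * ⟨-1, 1⟩, ?_⟩
    have h2 : (⟨1, 2⟩ : GaussianInt) ^ 2 = -3 + 4 * ⟨-1, 1⟩ + 4 := by decide
    have : 2 * (k + 1) = 2 * k + 2 := by ring
    rw [this, pow_add, hv, h2]
    ring

theorem rho_valuation_pi_pow_add_one_odd (n : ℕ) (hn : 0 < n) (hodd : Odd n) :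
    (⟨-1, 1⟩ : GaussianInt) ^ 3 ∣ (⟨1, 2⟩ : GaussianInt) ^ n + 1 ∧
      ¬ (⟨-1, 1⟩ : GaussianInt) ^ 4 ∣ (⟨1, 2⟩ : GaussianInt) ^ n + 1 := by
  obtain ⟨k, hk⟩ := hodd
  obtain ⟨v, hv⟩ := pi_sq_aux k
  have hρ3 : (⟨-1, 1⟩ : GaussianInt) ^ 3 = ⟨2, 2⟩ := by decide
  have hρ4 : (⟨-1, 1⟩ : GaussianInt) ^ 4 = -4 := by decide
  have h22 : (⟨2, 2⟩ : GaussianInt) = ⟨1, 2⟩ + 1 := by decide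
  have key : (⟨1, 2⟩ : GaussianInt) ^ n + 1
      = (⟨-1, 1⟩ : GaussianInt) ^ 3 + (⟨-1, 1⟩ : GaussianInt) ^ 4 * (-(⟨1, 2⟩ * v)) := by
    rw [hk, pow_add, hv, hρ3, hρ4, h22]
    ring
  constructor
  · refine ⟨1 + ⟨-1, 1⟩ * (-(⟨1, 2⟩ * v)), ?_⟩
    rw [key]
    ring
  · rintro ⟨c, hc⟩
    have h3 : (⟨-1, 1⟩ : GaussianInt) ^ 3 = (⟨-1, 1⟩ : GaussianInt) ^ 4 * (c + ⟨1, 2⟩ * v) := by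
      have := key
      rw [hc] at this
      linear_combination -this
    rw [hρ3, hρ4] at h3
    have hre := congrArg Zsqrtd.re h3
    have him := congrArg Zsqrtd.im h3
    simp [Zsqrtd.re_mul, Zsqrtd.im_mul] at hre him
    omega
end

section
/- Let π₅ = 1 + 2i and ρ = −1 + i in ℤ[i], and let n be an even positive integer. Then ρ² divides π₅ⁿ + 1 in ℤ[i], but ρ³ does not. (That is, the exponent e₀ of ρ in the prime factorization of π₅ⁿ + 1 equals 2 when n is even; this is the depth of the trees rooted at periodic vertices of the graph of θ on B_n for even n.) -/
lemma pi_pow_even_key (k : ℕ) : ∃ c : GaussianInt,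
    (⟨1, 2⟩ : GaussianInt) ^ (2 * k) = 1 + 4 * c := by
  induction k with
  | zero => exact ⟨0, by simp⟩
  | succ k ih =>
    obtain ⟨c, hc⟩ := ih
    refine ⟨⟨-1, 1⟩ + c * ⟨-3, 4⟩, ?_⟩
    have h2 : (⟨1, 2⟩ : GaussianInt) ^ 2 = ⟨-3, 4⟩ := by decide
    have h4 : (4 : GaussianInt) * ⟨-1, 1⟩ = ⟨-3, 4⟩ - 1 := by decide
    calc (⟨1, 2⟩ : GaussianInt) ^ (2 * (k + 1))
        = (⟨1, 2⟩ : GaussianInt) ^ (2 * k) * (⟨1, 2⟩ : GaussianInt) ^ 2 := by ring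
      _ = (1 + 4 * c) * ⟨-3, 4⟩ := by rw [hc, h2]
      _ = 1 + (4 * ⟨-1, 1⟩ + 4 * (c * ⟨-3, 4⟩)) := by rw [h4]; ring
      _ = 1 + 4 * (⟨-1, 1⟩ + c * ⟨-3, 4⟩) := by ring

theorem rho_valuation_pi_pow_add_one_even (n : ℕ) (hn : 0 < n) (heven : Even n) :
    (⟨-1, 1⟩ : GaussianInt) ^ 2 ∣ (⟨1, 2⟩ : GaussianInt) ^ n + 1 ∧
      ¬ (⟨-1, 1⟩ : GaussianInt) ^ 3 ∣ (⟨1, 2⟩ : GaussianInt) ^ n + 1 := by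
  obtain ⟨k, hk⟩ := heven
  have hn2 : n = 2 * k := by omega
  obtain ⟨c, hc⟩ := pi_pow_even_key k
  rw [hn2, hc]
  have hsum : (1 : GaussianInt) + 4 * c + 1 = 2 + 4 * c := by ring
  rw [hsum]
  constructor
  · refine ⟨⟨0, 1⟩ * (1 + 2 * c), ?_⟩
    have h1 : (⟨-1, 1⟩ : GaussianInt) ^ 2 * ⟨0, 1⟩ = 2 := by decide
    calc (2 : GaussianInt) + 4 * c
        = (⟨-1, 1⟩ ^ 2 * ⟨0, 1⟩) * (1 + 2 * c) := by rw [h1]; ring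
      _ = ⟨-1, 1⟩ ^ 2 * (⟨0, 1⟩ * (1 + 2 * c)) := by ring
  · rintro ⟨m, hm⟩
    have h3 : (⟨-1, 1⟩ : GaussianInt) ^ 3 = ⟨2, 2⟩ := by decide
    have h4 : (4 : GaussianInt) * c = ⟨2, 2⟩ * (⟨1, -1⟩ * c) := by
      have : (4 : GaussianInt) = ⟨2, 2⟩ * ⟨1, -1⟩ := by decide
      rw [this]; ring
    have h2 : (2 : GaussianInt) = ⟨2, 2⟩ * (m - ⟨1, -1⟩ * c) := by
      have := hm
      rw [h3] at this
      have : (2 : GaussianInt) + 4 * c = ⟨2, 2⟩ * m := this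
      rw [h4] at this
      linear_combination this
    have hnorm := congrArg Zsqrtd.norm h2
    rw [Zsqrtd.norm_mul] at hnorm
    have hn8 : Zsqrtd.norm (⟨2, 2⟩ : GaussianInt) = 8 := by decide
    have hn4 : Zsqrtd.norm (2 : GaussianInt) = 4 := by decide
    rw [hn8, hn4] at hnorm
    omega
end
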